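/- Assume condition (2.2) holds. Let δ_h : [0,T] → ℝ^{m+2} be continuous, written δ_h(t) = (δ_h^L(t), δ_h^R(t)) with δ_h^L(t) ∈ ℝ^m and δ_h^R(t) ∈ ℝ², and let ε_h : [0,T] → ℝ^{m+2} satisfy ε_h'(t) = M ε_h(t) + δ_h(t) with ε_h(0) = 0. Then for every t ∈ (0,T], |ε_h(t)|_∞ ≤ t · max_{0≤ϑ≤t} { |δ_h^L(ϑ)|_∞ + (8S/h)·|δ_h^R(ϑ)|_∞ }. -/

import Mathlib

/-- Tridiagonal matrix with diagonal `α`, subdiagonal `β` and superdiagonal `γ`. -/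
def tridiag {m : ℕ} (α β γ : Fin m → ℝ) : Matrix (Fin m) (Fin m) ℝ :=
  Matrix.of fun i j =>
    if (i : ℕ) = j then α i
    else if (i : ℕ) = (j : ℕ) + 1 then β i
    else if (j : ℕ) = (i : ℕ) + 1 then γ i
    else 0

/-- The `(m+1)×2` matrix whose only nonzero entry is `g` in the bottom-left position. -/
def Bmat {m : ℕ} (g : ℝ) : Matrix (Fin (m + 1)) (Fin 2) ℝ :=
  Matrix.of fun i j => if i = Fin.last m ∧ j = 0 then g else 0

/-- The `2×2` matrix both of whose rows equal `(−rS/h, r·s_{m+1}/h)`. -/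
noncomputable def Cmat (r spen S h : ℝ) : Matrix (Fin 2) (Fin 2) ℝ :=
  Matrix.of fun _ j => if j = 0 then -(r * S) / h else r * spen / h

/-- The logarithmic maximum norm `μ_∞[X] = max_i ( x_{ii} + Σ_{j≠i} |x_{ij}| )`. -/
noncomputable def logMaxNorm {ι : Type*} [Fintype ι] [DecidableEq ι]
    (X : Matrix ι ι ℝ) : ℝ :=
  ⨆ i, (X i i + ∑ j ∈ Finset.univ.erase i, |X i j|)

/-- The maximum norm of a real vector: `|v|_∞ = max_i |v i|`. -/
noncomputable def vecMaxNorm {ι : Type*} [Fintype ι] (v : ι → ℝ) : ℝ :=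
  ⨆ i, |v i|

section Helpers

lemma vecMaxNorm_eq_norm {ι : Type*} [Fintype ι] [Nonempty ι] (v : ι → ℝ) :
    vecMaxNorm v = ‖v‖ := by
  refine le_antisymm (ciSup_le fun i => ?_) ?_
  · simpa [Real.norm_eq_abs] using norm_le_pi_norm v i
  · have h0 : (0:ℝ) ≤ ⨆ i, |v i| := by
      obtain ⟨i⟩ := ‹Nonempty ι›
      exact le_trans (abs_nonneg (v i))
        (le_ciSup (f := fun i => |v i|) (Set.Finite.bddAbove (Set.finite_range _)) i)
    rw [show vecMaxNorm v = ⨆ i, |v i| from rfl]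
    exact (pi_norm_le_iff_of_nonneg h0).2 fun i => by
      simpa [Real.norm_eq_abs] using
        le_ciSup (Set.Finite.bddAbove (Set.finite_range fun i => |v i|)) i

lemma row_est' {ι : Type*} [Fintype ι] [DecidableEq ι]
    (M : Matrix ι ι ℝ) (i : ι) (v : ι → ℝ) (F τ r : ℝ)
    (hF : 0 ≤ F) (hτ : 0 ≤ τ) (hr : 0 ≤ r)
    (hd : 0 ≤ 1 + τ * M i i)
    (hrow : M i i + ∑ j ∈ Finset.univ.erase i, |M i j| ≤ -r)
    (hv : ∀ j, |v j| ≤ F) :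
    |v i + τ * M.mulVec v i| ≤ F := by
  have hsplit : M.mulVec v i = M i i * v i + ∑ j ∈ Finset.univ.erase i, M i j * v j := by
    rw [Matrix.mulVec, dotProduct]
    rw [← Finset.sum_erase_add _ _ (Finset.mem_univ i)]
    ring
  have h1 : v i + τ * M.mulVec v i
      = (1 + τ * M i i) * v i + τ * ∑ j ∈ Finset.univ.erase i, M i j * v j := by
    rw [hsplit]; ring
  rw [h1]
  calc |(1 + τ * M i i) * v i + τ * ∑ j ∈ Finset.univ.erase i, M i j * v j|
      ≤ (1 + τ * M i i) * F + τ * ∑ j ∈ Finset.univ.erase i, |M i j| * F := by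
        refine (abs_add_le _ _).trans (add_le_add ?_ ?_)
        · rw [abs_mul, abs_of_nonneg hd]
          exact mul_le_mul_of_nonneg_left (hv i) hd
        · rw [abs_mul, abs_of_nonneg hτ]
          refine mul_le_mul_of_nonneg_left ?_ hτ
          refine (Finset.abs_sum_le_sum_abs _ _).trans (Finset.sum_le_sum fun j _ => ?_)
          rw [abs_mul]
          exact mul_le_mul_of_nonneg_left (hv j) (abs_nonneg _)
    _ = F * (1 + τ * (M i i + ∑ j ∈ Finset.univ.erase i, |M i j|)) := by
        rw [← Finset.sum_mul]; ring
    _ ≤ F * (1 + τ * (-r)) := by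
        refine mul_le_mul_of_nonneg_left ?_ hF
        have := mul_le_mul_of_nonneg_left hrow hτ
        linarith
    _ ≤ F := by nlinarith [mul_nonneg (mul_nonneg hF hτ) hr]

open Finset in
lemma rowsum_aux {m : ℕ} (r : ℝ) (α β γ : Fin (m+1) → ℝ)
    (hmu : logMaxNorm (r • (1 : Matrix (Fin (m + 1)) (Fin (m + 1)) ℝ) + tridiag α β γ) ≤ 0)
    (hrow : r + α (Fin.last m) + |β (Fin.last m)| + |γ (Fin.last m)| ≤ 0) :
    ∀ j, tridiag α β γ j j +
      ((∑ p ∈ univ.erase j, |tridiag α β γ j p|) + ∑ k, |Bmat (γ (Fin.last m)) j k|) ≤ -r := by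
  intro j
  set A := tridiag α β γ with hA
  have hmurow : r + A j j + ∑ p ∈ univ.erase j, |A j p| ≤ 0 := by
    have h1 : (r • (1 : Matrix (Fin (m + 1)) (Fin (m + 1)) ℝ) + A) j j
        + ∑ p ∈ univ.erase j, |(r • (1 : Matrix (Fin (m + 1)) (Fin (m + 1)) ℝ) + A) j p|
        ≤ logMaxNorm (r • (1 : Matrix (Fin (m + 1)) (Fin (m + 1)) ℝ) + A) :=
      le_ciSup (f := fun i => (r • (1 : Matrix (Fin (m + 1)) (Fin (m + 1)) ℝ) + A) i i
        + ∑ p ∈ univ.erase i, |(r • (1 : Matrix (Fin (m + 1)) (Fin (m + 1)) ℝ) + A) i p|)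
        (Set.Finite.bddAbove (Set.finite_range _)) j
    have h2 : (r • (1 : Matrix (Fin (m + 1)) (Fin (m + 1)) ℝ) + A) j j = r + A j j := by
      simp [Matrix.add_apply, Matrix.smul_apply, Matrix.one_apply_eq]
    have h3 : ∑ p ∈ univ.erase j, |(r • (1 : Matrix (Fin (m + 1)) (Fin (m + 1)) ℝ) + A) j p|
        = ∑ p ∈ univ.erase j, |A j p| := by
      refine Finset.sum_congr rfl fun p hp => ?_
      have hne : j ≠ p := (Finset.ne_of_mem_erase hp).symm
      simp [Matrix.add_apply, Matrix.smul_apply, Matrix.one_apply_ne hne]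
    rw [h2, h3] at h1
    linarith [hmu]
  have hdiag : A j j = α j := by simp [hA, tridiag]
  have hBsum : ∑ k, |Bmat (γ (Fin.last m)) j k| = if j = Fin.last m then |γ (Fin.last m)| else 0 := by
    rw [Fin.sum_univ_two]
    by_cases hj : j = Fin.last m <;> simp [Bmat, hj]
  rw [hdiag] at hmurow
  rw [hdiag, hBsum]
  by_cases hj : j = Fin.last m
  · rw [if_pos hj]
    have hjm : (j : ℕ) = m := by rw [hj]; exact Fin.val_last m
    have hAbound : ∑ p ∈ univ.erase j, |A j p| ≤ |β j| := by
      have hentry : ∀ p ∈ univ.erase j, |A j p| = if (j:ℕ) = (p:ℕ) + 1 then |β j| else 0 := by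
        intro p hp
        have hne : (j:ℕ) ≠ (p:ℕ) := fun h => (Finset.ne_of_mem_erase hp) (Fin.ext h.symm)
        have hne2 : (p:ℕ) ≠ (j:ℕ) + 1 := by
          have := p.isLt; omega
        rw [hA]
        by_cases hc : (j:ℕ) = (p:ℕ) + 1 <;> simp [tridiag, hne, hne2, hc]
      rw [Finset.sum_congr rfl hentry]
      have hcard : (((univ.erase j).filter (fun p : Fin (m+1) => (j:ℕ) = (p:ℕ)+1)).card : ℝ) ≤ 1 := by
        have : ((univ.erase j).filter (fun p : Fin (m+1) => (j:ℕ) = (p:ℕ)+1)).card ≤ 1 := by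
          refine Finset.card_le_one.mpr fun a ha b hb => ?_
          simp only [Finset.mem_filter] at ha hb
          exact Fin.ext (by omega)
        exact_mod_cast this
      rw [Finset.sum_ite, Finset.sum_const, Finset.sum_const_zero, add_zero, nsmul_eq_mul]
      calc (((univ.erase j).filter (fun p : Fin (m+1) => (j:ℕ) = (p:ℕ)+1)).card : ℝ) * |β j|
          ≤ 1 * |β j| := mul_le_mul_of_nonneg_right hcard (abs_nonneg _)
        _ = |β j| := one_mul _
    rw [hj] at hAbound ⊢
    have hb : |β (Fin.last m)| ≥ 0 := abs_nonneg _
    rw [hj] at hmurow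
    linarith
  · rw [if_neg hj]
    linarith

end Helpers

set_option maxHeartbeats 2000000 in
/-- Assume condition (2.2) holds.  Let `δ_h : [0,T] → ℝ^{m+2}` be continuous, split as
`(δ_h^L, δ_h^R) ∈ ℝ^m × ℝ²`, and let `ε_h` satisfy `ε_h'(t) = M ε_h(t) + δ_h(t)`,
`ε_h(0) = 0`.  Then for every `t ∈ (0,T]`,
`|ε_h(t)|_∞ ≤ t · max_{0≤ϑ≤t} { |δ_h^L(ϑ)|_∞ + (8S/h)·|δ_h^R(ϑ)|_∞ }`. -/
theorem statement12 (m : ℕ) (r spen S T : ℝ) (hr : 0 < r) (hT : 0 < T)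
    (hspen : 0 < spen) (hsS : spen < S)
    (α β γ : Fin (m + 1) → ℝ) (hconv : m = 0 → β 0 = 0)
    (A : Matrix (Fin (m + 1)) (Fin (m + 1)) ℝ) (hA : A = tridiag α β γ)
    (B : Matrix (Fin (m + 1)) (Fin 2) ℝ) (hB : B = Bmat (γ (Fin.last m)))
    (C : Matrix (Fin 2) (Fin 2) ℝ) (hC : C = Cmat r spen S (S - spen))
    (M : Matrix (Fin (m + 1) ⊕ Fin 2) (Fin (m + 1) ⊕ Fin 2) ℝ)
    (hM : M = Matrix.fromBlocks A B 0 C)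
    (hinv : IsUnit (r • (1 : Matrix (Fin (m + 1)) (Fin (m + 1)) ℝ) + A).det)
    (hmu : logMaxNorm (r • (1 : Matrix (Fin (m + 1)) (Fin (m + 1)) ℝ) + A) ≤ 0)
    (hrow : r + α (Fin.last m) + |β (Fin.last m)| + |γ (Fin.last m)| ≤ 0)
    (δ : ℝ → (Fin (m + 1) ⊕ Fin 2) → ℝ)
    (hδcont : ContinuousOn δ (Set.Icc 0 T))
    (ε : ℝ → (Fin (m + 1) ⊕ Fin 2) → ℝ)
    (hε0 : ε 0 = 0)
    (hεderiv : ∀ t ∈ Set.Icc (0:ℝ) T, HasDerivAt ε (M.mulVec (ε t) + δ t) t) :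
    ∀ t : ℝ, 0 < t → t ≤ T →
      vecMaxNorm (ε t) ≤ t * ⨆ ϑ : Set.Icc (0:ℝ) t,
        (vecMaxNorm (fun i => δ ϑ (Sum.inl i)) +
          (8 * S / (S - spen)) * vecMaxNorm (fun i => δ ϑ (Sum.inr i))) := by
  intro t ht htT
  classical
  haveI : Nonempty (Fin (m+1) ⊕ Fin 2) := ⟨Sum.inl 0⟩
  haveI hneI : Nonempty (Set.Icc (0:ℝ) t) := ⟨⟨0, le_rfl, ht.le⟩⟩
  have hh : (0:ℝ) < S - spen := sub_pos.2 hsS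
  have hS : (0:ℝ) < S := hspen.trans hsS
  have hsub : Set.Icc (0:ℝ) t ⊆ Set.Icc (0:ℝ) T := Set.Icc_subset_Icc le_rfl htT
  have εcont : ContinuousOn ε (Set.Icc 0 T) := fun s hs =>
    (hεderiv s hs).continuousAt.continuousWithinAt
  have hcomp : ∀ s ∈ Set.Icc (0:ℝ) T, ∀ i, HasDerivAt (fun u => ε u i)
      ((M.mulVec (ε s) + δ s) i) s := fun s hs i => hasDerivAt_pi.1 (hεderiv s hs) i
  have hεF : ∀ s, ∀ i, |ε s i| ≤ ‖ε s‖ := fun s i => by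
    simpa [Real.norm_eq_abs] using norm_le_pi_norm (ε s) i
  set K := ⨆ ϑ : Set.Icc (0:ℝ) t,
      (vecMaxNorm (fun i => δ (ϑ:ℝ) (Sum.inl i)) +
        8 * S / (S - spen) * vecMaxNorm (fun i => δ (ϑ:ℝ) (Sum.inr i))) with hKdef
  set DL := ⨆ ϑ : Set.Icc (0:ℝ) t, vecMaxNorm (fun i => δ (ϑ:ℝ) (Sum.inl i)) with hDLdef
  set DR := ⨆ ϑ : Set.Icc (0:ℝ) t, vecMaxNorm (fun i => δ (ϑ:ℝ) (Sum.inr i)) with hDRdef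
  have hbddgen : ∀ F : ℝ → ℝ, ContinuousOn F (Set.Icc 0 t) →
      BddAbove (Set.range fun ϑ : Set.Icc (0:ℝ) t => F ϑ) := by
    intro F hF
    have h1 : (Set.range fun ϑ : Set.Icc (0:ℝ) t => F ϑ) = F '' Set.Icc 0 t := by
      rw [show (fun ϑ : Set.Icc (0:ℝ) t => F ϑ) = F ∘ Subtype.val from rfl, Set.range_comp,
        Subtype.range_coe]
    rw [h1]
    exact isCompact_Icc.bddAbove_image hF
  have hδcont' : ContinuousOn δ (Set.Icc 0 t) := hδcont.mono hsub
  have hcontL : ContinuousOn (fun ϑ => vecMaxNorm (fun i => δ ϑ (Sum.inl i))) (Set.Icc 0 t) := by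
    have e : (fun ϑ => vecMaxNorm (fun i => δ ϑ (Sum.inl i)))
        = fun ϑ => ‖(fun i => δ ϑ (Sum.inl i))‖ := funext fun ϑ => vecMaxNorm_eq_norm _
    rw [e]
    exact (continuousOn_pi.2 fun i => (continuous_apply (Sum.inl i)).comp_continuousOn hδcont').norm
  have hcontR : ContinuousOn (fun ϑ => vecMaxNorm (fun i => δ ϑ (Sum.inr i))) (Set.Icc 0 t) := by
    have e : (fun ϑ => vecMaxNorm (fun i => δ ϑ (Sum.inr i)))
        = fun ϑ => ‖(fun i => δ ϑ (Sum.inr i))‖ := funext fun ϑ => vecMaxNorm_eq_norm _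
    rw [e]
    exact (continuousOn_pi.2 fun i => (continuous_apply (Sum.inr i)).comp_continuousOn hδcont').norm
  have hbddL := hbddgen _ hcontL
  have hbddR := hbddgen _ hcontR
  have hbddK := hbddgen (fun ϑ => vecMaxNorm (fun i => δ ϑ (Sum.inl i))
      + 8 * S / (S - spen) * vecMaxNorm (fun i => δ ϑ (Sum.inr i)))
    (hcontL.add (continuousOn_const.mul hcontR))
  have hnnL : ∀ ϑ : ℝ, 0 ≤ vecMaxNorm (fun i => δ ϑ (Sum.inl i)) := fun ϑ => by
    rw [vecMaxNorm_eq_norm]; exact norm_nonneg _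
  have hnnR : ∀ ϑ : ℝ, 0 ≤ vecMaxNorm (fun i => δ ϑ (Sum.inr i)) := fun ϑ => by
    rw [vecMaxNorm_eq_norm]; exact norm_nonneg _
  have hcb : (0:ℝ) ≤ 8 * S / (S - spen) := by positivity
  have hLle : ∀ s ∈ Set.Icc (0:ℝ) t, vecMaxNorm (fun i => δ s (Sum.inl i)) ≤ DL := fun s hs =>
    le_ciSup (f := fun ϑ : Set.Icc (0:ℝ) t => vecMaxNorm (fun i => δ (ϑ:ℝ) (Sum.inl i)))
      hbddL ⟨s, hs⟩
  have hRle : ∀ s ∈ Set.Icc (0:ℝ) t, vecMaxNorm (fun i => δ s (Sum.inr i)) ≤ DR := fun s hs =>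
    le_ciSup (f := fun ϑ : Set.Icc (0:ℝ) t => vecMaxNorm (fun i => δ (ϑ:ℝ) (Sum.inr i)))
      hbddR ⟨s, hs⟩
  have hDLK : DL ≤ K := by
    rw [hDLdef, hKdef]
    exact ciSup_le fun ϑ => le_trans
      (le_add_of_nonneg_right (mul_nonneg hcb (hnnR ϑ)))
      (le_ciSup hbddK ϑ)
  have hDRK : 8 * S / (S - spen) * DR ≤ K := by
    rw [hDRdef, hKdef, Real.mul_iSup_of_nonneg hcb]
    exact ciSup_le fun ϑ => le_trans
      (le_add_of_nonneg_left (hnnL ϑ))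
      (le_ciSup hbddK ϑ)
  have hDL0 : 0 ≤ DL := le_trans (hnnL 0) (hLle 0 ⟨le_rfl, ht.le⟩)
  have hDR0 : 0 ≤ DR := le_trans (hnnR 0) (hRle 0 ⟨le_rfl, ht.le⟩)
  have hK0 : 0 ≤ K := le_trans hDL0 hDLK
  have hδLc : ∀ s ∈ Set.Icc (0:ℝ) t, ∀ i, |δ s (Sum.inl i)| ≤ DL := by
    intro s hs i
    refine le_trans ?_ (hLle s hs)
    rw [vecMaxNorm_eq_norm]
    simpa [Real.norm_eq_abs] using norm_le_pi_norm (fun i => δ s (Sum.inl i)) i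
  have hδRc : ∀ s ∈ Set.Icc (0:ℝ) t, ∀ i, |δ s (Sum.inr i)| ≤ DR := by
    intro s hs i
    refine le_trans ?_ (hRle s hs)
    rw [vecMaxNorm_eq_norm]
    simpa [Real.norm_eq_abs] using norm_le_pi_norm (fun i => δ s (Sum.inr i)) i
  -- row sums of M
  have hrowM : ∀ j : Fin (m+1), M (Sum.inl j) (Sum.inl j)
      + ∑ p ∈ Finset.univ.erase (Sum.inl j), |M (Sum.inl j) p| ≤ -r := by
    intro j
    have hra := rowsum_aux r α β γ (by rw [← hA]; exact hmu) hrow j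
    have hdiagM : M (Sum.inl j) (Sum.inl j) = A j j := by
      rw [hM]; exact Matrix.fromBlocks_apply₁₁ A B 0 C j j
    have hsum : ∑ p ∈ Finset.univ.erase (Sum.inl j), |M (Sum.inl j) p|
        = (∑ p ∈ Finset.univ.erase j, |A j p|) + ∑ k, |B j k| := by
      have h2 : (∑ p ∈ Finset.univ.erase (Sum.inl j), |M (Sum.inl j) p|)
            + |M (Sum.inl j) (Sum.inl j)|
          = ((∑ p ∈ Finset.univ.erase j, |A j p|) + ∑ k, |B j k|)
            + |M (Sum.inl j) (Sum.inl j)| := by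
        rw [Finset.sum_erase_add _ _ (Finset.mem_univ _), Fintype.sum_sum_type]
        have e1 : ∀ p, M (Sum.inl j) (Sum.inl p) = A j p := fun p => by
          rw [hM]; exact Matrix.fromBlocks_apply₁₁ A B 0 C j p
        have e2 : ∀ k, M (Sum.inl j) (Sum.inr k) = B j k := fun k => by
          rw [hM]; exact Matrix.fromBlocks_apply₁₂ A B 0 C j k
        simp only [e1, e2, hdiagM]
        rw [← Finset.sum_erase_add Finset.univ (fun p => |A j p|) (Finset.mem_univ j)]
        ring
      exact add_right_cancel h2
    rw [hdiagM, hsum, hA, hB]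
    exact hra
  have hMdiag : ∀ j : Fin (m+1), M (Sum.inl j) (Sum.inl j) = α j := fun j => by
    rw [hM, Matrix.fromBlocks_apply₁₁, hA]
    simp [tridiag]
  -- the R block action
  have hMr : ∀ (v : (Fin (m+1) ⊕ Fin 2) → ℝ) (k : Fin 2),
      M.mulVec v (Sum.inr k)
        = r / (S - spen) * (-S * v (Sum.inr 0) + spen * v (Sum.inr 1)) := by
    intro v k
    rw [hM, hC]
    simp only [Matrix.mulVec, dotProduct, Fintype.sum_sum_type,
      Matrix.fromBlocks_apply₂₁, Matrix.fromBlocks_apply₂₂, Matrix.zero_apply, zero_mul,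
      Finset.sum_const_zero, zero_add, Fin.sum_univ_two, Cmat, Matrix.of_apply,
      if_pos, Fin.isValue]
    norm_num
    ring
  set w : ℝ → ℝ := fun s => -S * ε s (Sum.inr 0) + spen * ε s (Sum.inr 1) with hwdef
  set gg : ℝ → ℝ := fun s => -S * δ s (Sum.inr 0) + spen * δ s (Sum.inr 1) with hggdef
  have hw0 : w 0 = 0 := by simp only [hwdef, hε0]; simp
  have hwderiv : ∀ s ∈ Set.Icc (0:ℝ) T, HasDerivAt w (-r * w s + gg s) s := by
    intro s hs
    have h0 := hcomp s hs (Sum.inr 0)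
    have h1 := hcomp s hs (Sum.inr 1)
    have hc2 := (h0.const_mul (-S)).add (h1.const_mul spen)
    refine hc2.congr_deriv (Eq.symm ?_)
    rw [Pi.add_apply, Pi.add_apply, hMr (ε s) 0, hMr (ε s) 1]
    simp only [hwdef, hggdef]
    field_simp
    ring
  have hgb : ∀ s ∈ Set.Icc (0:ℝ) t, |gg s| ≤ 2 * S * DR := by
    intro s hs
    have h0 := hδRc s hs 0
    have h1 := hδRc s hs 1
    simp only [hggdef]
    calc |(-S) * δ s (Sum.inr 0) + spen * δ s (Sum.inr 1)|
        ≤ |(-S) * δ s (Sum.inr 0)| + |spen * δ s (Sum.inr 1)| := abs_add_le _ _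
      _ = S * |δ s (Sum.inr 0)| + spen * |δ s (Sum.inr 1)| := by
          rw [abs_mul, abs_mul, abs_neg, abs_of_pos hS, abs_of_pos hspen]
      _ ≤ 2 * S * DR := by
          nlinarith [mul_le_mul_of_nonneg_left h0 hS.le,
            mul_le_mul_of_nonneg_left h1 hspen.le,
            mul_le_mul_of_nonneg_right hsS.le hDR0]
  -- bound on w
  have hWb : ∀ u ∈ Set.Icc (0:ℝ) t, |w u| ≤ 2 * S * DR / r := by
    have hwcont0 : ContinuousOn w (Set.Icc 0 t) := fun s hs =>
      (hwderiv s (hsub hs)).continuousAt.continuousWithinAt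
    have hwcont : ContinuousOn (fun u => |w u|) (Set.Icc 0 t) := hwcont0.abs
    intro u hu
    refine le_of_forall_pos_le_add fun c' hc' => ?_
    set f'w : ℝ → ℝ := fun x => if |w x| = 2 * S * DR / r + c' then -(r*c')/2
      else |(-r) * w x + gg x| + 1 with hf'w
    have hinit : |w 0| ≤ 2 * S * DR / r + c' := by
      rw [hw0, abs_zero]; positivity
    have hbound : ∀ x ∈ Set.Ico (0:ℝ) t, |w x| = 2*S*DR/r + c' → f'w x < 0 := by
      intro x _ hx
      simp only [hf'w]
      rw [if_pos hx]
      nlinarith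
    have hslope : ∀ x ∈ Set.Ico (0:ℝ) t, ∀ ρ, f'w x < ρ →
        ∃ᶠ z in nhdsWithin x (Set.Ioi x), slope (fun u => |w u|) x z < ρ := by
      intro x hx ρ hρ
      have hxt : x ∈ Set.Icc (0:ℝ) t := Set.Ico_subset_Icc_self hx
      have hxT : x ∈ Set.Icc (0:ℝ) T := hsub hxt
      have hder := hwderiv x hxT
      simp only [hf'w] at hρ
      by_cases hcross : |w x| = 2 * S * DR / r + c'
      · rw [if_pos hcross] at hρ
        apply Filter.Eventually.frequently
        have hlo := (hasDerivAt_iff_isLittleO.1 hder).def (show (0:ℝ) < r*c'/2 by positivity)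
        have hev1 : ∀ᶠ z in nhdsWithin x (Set.Ioi x),
            ‖w z - w x - (z - x) • (-r * w x + gg x)‖ ≤ r*c'/2 * ‖z - x‖ :=
          hlo.filter_mono nhdsWithin_le_nhds
        have hev2 : Set.Ioc x (x + 1/r) ∈ nhdsWithin x (Set.Ioi x) :=
          Ioc_mem_nhdsGT_of_mem ⟨le_rfl, lt_add_of_pos_right x (by positivity)⟩
        filter_upwards [hev1, hev2] with z hz1 hz2
        have hτ : 0 < z - x := sub_pos.2 hz2.1
        have hτr : (z - x) * r ≤ 1 := by
          have h' : z - x ≤ 1/r := by linarith [hz2.2]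
          calc (z-x)*r ≤ (1/r)*r := mul_le_mul_of_nonneg_right h' hr.le
            _ = 1 := by field_simp
        simp only [Real.norm_eq_abs, smul_eq_mul] at hz1
        rw [abs_of_pos hτ] at hz1
        have e : w z - w x - (z - x) * (-r * w x + gg x)
            = w z - (w x + (z-x) * (-r * w x + gg x)) := by ring
        rw [e] at hz1
        have h2 : |w x + (z - x) * (-r * w x + gg x)| ≤ |w x| - (z-x) * r * c' := by
          have hgx := hgb x hxt
          have e2 : w x + (z - x) * (-r * w x + gg x)
              = (1 - (z-x)*r) * w x + (z-x) * gg x := by ring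
          rw [e2]
          have hge0 : (0:ℝ) ≤ 1 - (z-x)*r := by linarith
          calc |(1 - (z-x)*r) * w x + (z-x) * gg x|
              ≤ (1 - (z-x)*r) * |w x| + (z-x) * |gg x| := by
                refine (abs_add_le _ _).trans (add_le_add ?_ ?_)
                · rw [abs_mul, abs_of_nonneg hge0]
                · rw [abs_mul, abs_of_pos hτ]
            _ ≤ |w x| - (z-x)*r*c' := by
                rw [hcross]
                have hrC : r * (2*S*DR/r) = 2*S*DR := by field_simp
                nlinarith [mul_le_mul_of_nonneg_left hgx hτ.le]
        have h3 : |w z| - |w x| ≤ -((z-x) * (r * c') / 2) := by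
          have h4 := abs_sub_abs_le_abs_sub (w z) (w x + (z-x)*(-r*w x + gg x))
          nlinarith [h4, hz1, h2]
        rw [slope_def_field, div_lt_iff₀ hτ]
        nlinarith [h3, mul_lt_mul_of_pos_left hρ hτ]
      · rw [if_neg hcross] at hρ
        apply Filter.Eventually.frequently
        have hsl : Filter.Tendsto (slope w x) (nhdsWithin x {x}ᶜ)
            (nhds (-r * w x + gg x)) := hasDerivAt_iff_tendsto_slope.1 hder
        have hev : ∀ᶠ z in nhdsWithin x {x}ᶜ, |slope w x z| < |(-r) * w x + gg x| + 1 :=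
          hsl.abs.eventually_lt_const (by rw [neg_mul]; exact lt_add_one _)
        have hev2 : ∀ᶠ z in nhdsWithin x (Set.Ioi x),
            |slope w x z| < |(-r) * w x + gg x| + 1 :=
          hev.filter_mono (nhdsWithin_mono x fun z hz =>
            Set.mem_compl_singleton_iff.mpr (LT.lt.ne' hz))
        filter_upwards [hev2, self_mem_nhdsWithin] with z hz1 hz2
        have hτ : 0 < z - x := sub_pos.2 hz2
        have h3 : slope (fun u => |w u|) x z ≤ |slope w x z| := by
          rw [slope_def_field, slope_def_field, abs_div, abs_of_pos hτ]
          gcongr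
          · exact abs_sub_abs_le_abs_sub _ _
        linarith
    have key := image_le_of_liminf_slope_right_lt_deriv_boundary' hwcont hslope hinit
      continuousOn_const (fun x _ => hasDerivWithinAt_const x _ _) hbound
    exact key hu
  -- bound on the inr components
  have hCRK : r / (S - spen) * (2*S*DR/r) + DR ≤ K := by
    have e : r / (S - spen) * (2*S*DR/r) = 2*S*DR/(S-spen) := by
      field_simp
    rw [e]
    refine le_trans ?_ hDRK
    have key : 8*S/(S-spen)*DR - (2*S*DR/(S-spen) + DR) = (6*S*DR - (S-spen)*DR)/(S-spen) := by
      field_simp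
      ring
    have hnum : 0 ≤ 6*S*DR - (S-spen)*DR := by
      nlinarith [mul_nonneg hS.le hDR0, mul_nonneg hspen.le hDR0]
    linarith [div_nonneg hnum hh.le, key]
  have hRb : ∀ u ∈ Set.Icc (0:ℝ) t, ∀ k : Fin 2, |ε u (Sum.inr k)| ≤ u * K := by
    intro u hu k
    have hderk : ∀ s ∈ Set.Icc (0:ℝ) t, HasDerivWithinAt (fun v => ε v (Sum.inr k))
        ((fun s => r/(S-spen) * w s + δ s (Sum.inr k)) s) (Set.Icc 0 t) s := by
      intro s hs
      have h := hcomp s (hsub hs) (Sum.inr k)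
      have e : (M.mulVec (ε s) + δ s) (Sum.inr k) = r/(S-spen) * w s + δ s (Sum.inr k) := by
        rw [Pi.add_apply, hMr (ε s) k]
      rw [e] at h
      exact h.hasDerivWithinAt
    have hbnd : ∀ s ∈ Set.Icc (0:ℝ) t,
        ‖r/(S-spen) * w s + δ s (Sum.inr k)‖ ≤ r/(S-spen) * (2*S*DR/r) + DR := by
      intro s hs
      rw [Real.norm_eq_abs]
      have h1 := hWb s hs
      have h2 := hδRc s hs k
      have hrh : (0:ℝ) ≤ r/(S-spen) := by positivity
      calc |r/(S-spen) * w s + δ s (Sum.inr k)|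
          ≤ r/(S-spen) * |w s| + |δ s (Sum.inr k)| := by
            refine (abs_add_le _ _).trans (add_le_add ?_ le_rfl)
            rw [abs_mul, abs_of_nonneg hrh]
        _ ≤ _ := add_le_add (mul_le_mul_of_nonneg_left h1 hrh) h2
    have hmvt := Convex.norm_image_sub_le_of_norm_hasDerivWithin_le hderk hbnd
      (convex_Icc 0 t) (Set.left_mem_Icc.2 ht.le) hu
    simp only [hε0, Pi.zero_apply, sub_zero, Real.norm_eq_abs] at hmvt
    rw [abs_of_nonneg hu.1] at hmvt
    calc |ε u (Sum.inr k)| ≤ (r/(S-spen) * (2*S*DR/r) + DR) * u := hmvt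
      _ ≤ K * u := mul_le_mul_of_nonneg_right hCRK hu.1
      _ = u * K := mul_comm _ _
  -- main barrier
  have hmain : ∀ c, 0 < c → ‖ε t‖ ≤ c + t * (K + c) := by
    intro c hc
    have hfcont : ContinuousOn (fun s => ‖ε s‖) (Set.Icc 0 t) := (εcont.mono hsub).norm
    have hinit : ‖ε 0‖ ≤ c + 0 * (K + c) := by
      rw [hε0]; simp; linarith
    have hBder : ∀ x ∈ Set.Ico (0:ℝ) t,
        HasDerivWithinAt (fun s => c + s * (K + c)) (K + c) (Set.Ici x) x := by
      intro x _
      have h' : HasDerivAt (fun s => c + s * (K + c)) (K + c) x := by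
        simpa using ((hasDerivAt_id x).mul_const (K + c)).const_add c
      exact h'.hasDerivWithinAt
    have hBcont : ContinuousOn (fun s : ℝ => c + s * (K + c)) (Set.Icc 0 t) :=
      continuousOn_const.add (continuousOn_id.mul continuousOn_const)
    set f'L : ℝ → ℝ := fun x => if ‖ε x‖ = c + x * (K + c) then K + c/2
      else ‖M.mulVec (ε x) + δ x‖ + 1 with hf'L
    have hbound : ∀ x ∈ Set.Ico (0:ℝ) t, ‖ε x‖ = c + x*(K+c) → f'L x < K + c := by
      intro x _ hx
      simp only [hf'L]
      rw [if_pos hx]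
      linarith
    have hslope : ∀ x ∈ Set.Ico (0:ℝ) t, ∀ ρ, f'L x < ρ →
        ∃ᶠ z in nhdsWithin x (Set.Ioi x), slope (fun s => ‖ε s‖) x z < ρ := by
      intro x hx ρ hρ
      have hxt : x ∈ Set.Icc (0:ℝ) t := Set.Ico_subset_Icc_self hx
      have hxT : x ∈ Set.Icc (0:ℝ) T := hsub hxt
      simp only [hf'L] at hρ
      by_cases hcross : ‖ε x‖ = c + x * (K + c)
      · rw [if_pos hcross] at hρ
        apply Filter.Eventually.frequently
        have hcomps : ∀ᶠ z in nhdsWithin x (Set.Ioi x),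
            ∀ i, |ε z i| ≤ ‖ε x‖ + (z - x) * (K + c/2) := by
          rw [Filter.eventually_all]
          intro i
          cases i with
          | inr k =>
            filter_upwards [Ioc_mem_nhdsGT_of_mem
              (show x ∈ Set.Ico x t from ⟨le_rfl, hx.2⟩)] with z hz
            have hz0 : z ∈ Set.Icc (0:ℝ) t := ⟨le_trans hx.1 hz.1.le, hz.2⟩
            have h1 := hRb z hz0 k
            have hxK : x * K ≤ ‖ε x‖ := by
              rw [hcross]
              nlinarith [mul_nonneg hx.1 hc.le]
            calc |ε z (Sum.inr k)| ≤ z * K := h1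
              _ = x*K + (z-x)*K := by ring
              _ ≤ ‖ε x‖ + (z-x)*(K + c/2) := by
                  nlinarith [mul_nonneg (sub_pos.2 hz.1).le (half_pos hc).le]
          | inl j =>
            have hder := hcomp x hxT (Sum.inl j)
            have hlo := (hasDerivAt_iff_isLittleO.1 hder).def (show (0:ℝ) < c/2 by positivity)
            have hev1 : ∀ᶠ z in nhdsWithin x (Set.Ioi x),
                ‖ε z (Sum.inl j) - ε x (Sum.inl j)
                  - (z - x) • ((M.mulVec (ε x) + δ x) (Sum.inl j))‖ ≤ c/2 * ‖z - x‖ :=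
              hlo.filter_mono nhdsWithin_le_nhds
            have hτ0 : (0:ℝ) < (1 + |α j|)⁻¹ := by positivity
            have hev2 : Set.Ioc x (x + (1 + |α j|)⁻¹) ∈ nhdsWithin x (Set.Ioi x) :=
              Ioc_mem_nhdsGT_of_mem ⟨le_rfl, lt_add_of_pos_right x hτ0⟩
            filter_upwards [hev1, hev2] with z hz1 hz2
            have hτ : 0 < z - x := sub_pos.2 hz2.1
            have hτle : (z - x) * (1 + |α j|) ≤ 1 := by
              have h' : z - x ≤ (1 + |α j|)⁻¹ := by linarith [hz2.2]
              calc (z-x)*(1+|α j|) ≤ (1+|α j|)⁻¹ * (1+|α j|) :=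
                    mul_le_mul_of_nonneg_right h' (by positivity)
                _ = 1 := by field_simp
            have hd : 0 ≤ 1 + (z-x) * M (Sum.inl j) (Sum.inl j) := by
              rw [hMdiag j]
              nlinarith [mul_le_mul_of_nonneg_left (neg_abs_le (α j)) hτ.le,
                abs_nonneg (α j)]
            have hrowj := row_est' M (Sum.inl j) (ε x) (‖ε x‖) (z - x) r
              (norm_nonneg _) hτ.le hr.le hd (hrowM j) (hεF x)
            simp only [Real.norm_eq_abs, smul_eq_mul] at hz1
            rw [abs_of_pos hτ] at hz1
            have e : ε z (Sum.inl j) - ε x (Sum.inl j)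
                  - (z - x) * ((M.mulVec (ε x) + δ x) (Sum.inl j))
                = ε z (Sum.inl j)
                  - (ε x (Sum.inl j) + (z-x) * ((M.mulVec (ε x) + δ x) (Sum.inl j))) := by
              ring
            rw [e] at hz1
            have h2 : |ε x (Sum.inl j) + (z-x) * ((M.mulVec (ε x) + δ x) (Sum.inl j))|
                ≤ ‖ε x‖ + (z-x)*DL := by
              have e2 : ε x (Sum.inl j) + (z-x) * ((M.mulVec (ε x) + δ x) (Sum.inl j))
                  = (ε x (Sum.inl j) + (z-x) * (M.mulVec (ε x) (Sum.inl j)))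
                    + (z-x) * (δ x (Sum.inl j)) := by
                rw [Pi.add_apply]; ring
              rw [e2]
              refine (abs_add_le _ _).trans (add_le_add hrowj ?_)
              rw [abs_mul, abs_of_pos hτ]
              exact mul_le_mul_of_nonneg_left (hδLc x hxt j) hτ.le
            have h3 := abs_sub_abs_le_abs_sub (ε z (Sum.inl j))
              (ε x (Sum.inl j) + (z-x)*((M.mulVec (ε x) + δ x) (Sum.inl j)))
            nlinarith [mul_le_mul_of_nonneg_left hDLK hτ.le]
        filter_upwards [hcomps, self_mem_nhdsWithin] with z hz hzx
        have hτ : 0 < z - x := sub_pos.2 hzx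
        have hnn : (0:ℝ) ≤ ‖ε x‖ + (z - x) * (K + c/2) := by
          nlinarith [norm_nonneg (ε x), hK0, half_pos hc]
        have hfz : ‖ε z‖ ≤ ‖ε x‖ + (z - x) * (K + c/2) :=
          (pi_norm_le_iff_of_nonneg hnn).2 fun i => by
            rw [Real.norm_eq_abs]; exact hz i
        rw [slope_def_field, div_lt_iff₀ hτ]
        nlinarith [hfz, mul_lt_mul_of_pos_left hρ hτ]
      · rw [if_neg hcross] at hρ
        apply Filter.Eventually.frequently
        have hder := hεderiv x hxT
        have hsl : Filter.Tendsto (slope ε x) (nhdsWithin x {x}ᶜ)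
            (nhds (M.mulVec (ε x) + δ x)) := hasDerivAt_iff_tendsto_slope.1 hder
        have hev : ∀ᶠ z in nhdsWithin x {x}ᶜ,
            ‖slope ε x z‖ < ‖M.mulVec (ε x) + δ x‖ + 1 :=
          hsl.norm.eventually_lt_const (lt_add_one _)
        have hev2 : ∀ᶠ z in nhdsWithin x (Set.Ioi x),
            ‖slope ε x z‖ < ‖M.mulVec (ε x) + δ x‖ + 1 :=
          hev.filter_mono (nhdsWithin_mono x fun z hz =>
            Set.mem_compl_singleton_iff.mpr (LT.lt.ne' hz))
        filter_upwards [hev2, self_mem_nhdsWithin] with z hz1 hz2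
        have hτ : 0 < z - x := sub_pos.2 hz2
        have h3 : slope (fun s => ‖ε s‖) x z ≤ ‖slope ε x z‖ := by
          have e : ‖slope ε x z‖ = ‖ε z - ε x‖ / (z - x) := by
            rw [slope_def_module, norm_smul, Real.norm_eq_abs, abs_inv, abs_of_pos hτ,
              inv_mul_eq_div]
          rw [slope_def_field, e]
          gcongr
          · exact norm_sub_norm_le _ _
        linarith
    have key := image_le_of_liminf_slope_right_lt_deriv_boundary' hfcont hslope hinit
      hBcont hBder hbound
    exact key (Set.right_mem_Icc.2 ht.le)
  have hfinal : ‖ε t‖ ≤ t * K := by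
    refine le_of_forall_pos_le_add fun η hη => ?_
    have h1t : (0:ℝ) < 1 + t := by linarith
    have h' := hmain (η / (1 + t)) (by positivity)
    have e : η/(1+t) + t * (K + η/(1+t)) = t*K + η := by
      field_simp
      ring
    linarith
  calc vecMaxNorm (ε t) = ‖ε t‖ := vecMaxNorm_eq_norm _
    _ ≤ t * K := hfinal
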